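/- Let (V, ⪯) be a finite poset with greatest element and minimal-element set L, satisfying (PCC). Then (V, ⪯) is a join-semilattice if and only if the clustering system {C(v) : v ∈ V} is closed under nonempty intersections, where C(v) = {x ∈ L : x ⪯ v}. -/

import Mathlib

/-- A finite poset with greatest element satisfying (PCC) is a join-semilattice
iff its clustering system is closed under nonempty intersections. -/
theorem joinSemilattice_iff_clustering_closed_of_PCC {V : Type*} [Fintype V]
    [PartialOrder V] [OrderTop V]
    (C : V → Set V)
    (hC : ∀ v : V, C v = {x : V | (∀ y, y ≤ x → y = x) ∧ x ≤ v})
    (pcc : ∀ u v : V, (u ≤ v ∨ v ≤ u) ↔ (C u ⊆ C v ∨ C v ⊆ C u)) :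
    (∀ a b : V, ∃ z, a ≤ z ∧ b ≤ z ∧ ∀ w, a ≤ w → b ≤ w → z ≤ w) ↔
    (∀ u v : V, (C u ∩ C v).Nonempty → ∃ w : V, C u ∩ C v = C w) := by
  classical
  have hmem : ∀ x v : V, x ∈ C v ↔ (∀ y, y ≤ x → y = x) ∧ x ≤ v := by
    intro x v; rw [hC v]; rfl
  -- every cluster is nonempty
  have hne : ∀ v : V, (C v).Nonempty := by
    intro v
    obtain ⟨m, hm, hmin⟩ : ∃ m ∈ Finset.univ.filter (fun y => y ≤ v), ∀ x ∈ Finset.univ.filter (fun y => y ≤ v), ¬ x < m := by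
      obtain ⟨m, hm⟩ := Finset.exists_minimal (s := Finset.univ.filter (fun y => y ≤ v)) ⟨v, by simp⟩
      exact ⟨m, hm.1, fun x hx hlt => hlt.not_ge (hm.2 hx hlt.le)⟩
    have hmv : m ≤ v := by simpa using hm
    refine ⟨m, (hmem m v).2 ⟨?_, hmv⟩⟩
    intro y hy
    by_contra h
    exact hmin y (by simp [hy.trans hmv]) (lt_of_le_of_ne hy h)
  have hmono : ∀ {u v : V}, u ≤ v → C u ⊆ C v := by
    intro u v huv x hx
    rw [hmem] at hx ⊢
    exact ⟨hx.1, hx.2.trans huv⟩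
  constructor
  · -- joins exist ⟹ closed under nonempty intersections
    intro hjoin u v hint
    obtain ⟨x, hx⟩ := hint
    have lub : ∀ S : Finset V, S.Nonempty →
        ∃ z, (∀ s ∈ S, s ≤ z) ∧ ∀ w, (∀ s ∈ S, s ≤ w) → z ≤ w := by
      intro S hS
      induction hS using Finset.Nonempty.cons_induction with
      | singleton a => exact ⟨a, by simp, fun w h => h a (by simp)⟩
      | cons a S ha hS ih =>
        obtain ⟨z, hz1, hz2⟩ := ih
        obtain ⟨t, hat, hzt, hleast⟩ := hjoin a z
        refine ⟨t, ?_, ?_⟩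
        · intro s hs
          rcases Finset.mem_cons.1 hs with rfl | hs
          · exact hat
          · exact (hz1 s hs).trans hzt
        · intro w hw
          exact hleast w (hw a (Finset.mem_cons_self _ _))
            (hz2 w fun s hs => hw s (Finset.mem_cons_of_mem hs))
    set S : Finset V := Finset.univ.filter (fun s => s ≤ u ∧ s ≤ v) with hSdef
    have hSne : S.Nonempty := by
      refine ⟨x, ?_⟩
      simp only [hSdef, Finset.mem_filter, Finset.mem_univ, true_and]
      exact ⟨((hmem x u).1 hx.1).2, ((hmem x v).1 hx.2).2⟩
    obtain ⟨z, hz1, hz2⟩ := lub S hSne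
    refine ⟨z, Set.Subset.antisymm ?_ ?_⟩
    · intro y hy
      have h1 := (hmem y u).1 hy.1
      have h2 := (hmem y v).1 hy.2
      refine (hmem y z).2 ⟨h1.1, hz1 y ?_⟩
      simp only [hSdef, Finset.mem_filter, Finset.mem_univ, true_and]
      exact ⟨h1.2, h2.2⟩
    · have hzu : z ≤ u := hz2 u (by
        intro s hs
        simp only [hSdef, Finset.mem_filter, Finset.mem_univ, true_and] at hs
        exact hs.1)
      have hzv : z ≤ v := hz2 v (by
        intro s hs
        simp only [hSdef, Finset.mem_filter, Finset.mem_univ, true_and] at hs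
        exact hs.2)
      intro y hy
      exact ⟨hmono hzu hy, hmono hzv hy⟩
  · -- closed under nonempty intersections ⟹ joins exist
    intro hclosed a b
    set U : Finset V := Finset.univ.filter (fun w => a ≤ w ∧ b ≤ w) with hU
    have hUmem : ∀ w : V, w ∈ U ↔ a ≤ w ∧ b ≤ w := by
      intro w; simp [hU]
    have hUne : U.Nonempty := ⟨⊤, (hUmem ⊤).2 ⟨le_top, le_top⟩⟩
    -- from minimality + ≤ to equality
    have eqmin : ∀ z s : V, z ∈ U → (∀ y ∈ U, ¬ y < z) → s ∈ U → s ≤ z → s = z := by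
      intro z s _ hzmin hs hsz
      by_contra h
      exact hzmin s hs (lt_of_le_of_ne hsz h)
    -- any two minimal elements of U are equal
    have key : ∀ z1 z2 : V, z1 ∈ U → z2 ∈ U →
        (∀ y ∈ U, ¬ y < z1) → (∀ y ∈ U, ¬ y < z2) → z1 = z2 := by
      intro z1 z2 hz1U hz2U hz1m hz2m
      obtain ⟨haz1, hbz1⟩ := (hUmem z1).1 hz1U
      obtain ⟨haz2, hbz2⟩ := (hUmem z2).1 hz2U
      -- helper: if z1 and z2 comparable, they are equal
      have comp_eq : (z1 ≤ z2 ∨ z2 ≤ z1) → z1 = z2 := by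
        rintro (h | h)
        · exact eqmin z2 z1 hz2U hz2m hz1U h
        · exact (eqmin z1 z2 hz1U hz1m hz2U h).symm
      have hsub : C a ⊆ C z1 ∩ C z2 := fun y hy => ⟨hmono haz1 hy, hmono haz2 hy⟩
      have hsubb : C b ⊆ C z1 ∩ C z2 := fun y hy => ⟨hmono hbz1 hy, hmono hbz2 hy⟩
      obtain ⟨t, ht⟩ := hclosed z1 z2 ((hne a).mono hsub)
      have hCt1 : C t ⊆ C z1 := ht ▸ Set.inter_subset_left
      have hCt2 : C t ⊆ C z2 := ht ▸ Set.inter_subset_right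
      have hCat : C a ⊆ C t := ht ▸ hsub
      have hCbt : C b ⊆ C t := ht ▸ hsubb
      rcases (pcc t z1).2 (Or.inl hCt1) with htz1 | hz1t
      · rcases (pcc t z2).2 (Or.inl hCt2) with htz2 | hz2t
        · -- t ≤ z1 and t ≤ z2
          rcases (pcc a t).2 (Or.inl hCat) with hat | hta
          · rcases (pcc b t).2 (Or.inl hCbt) with hbt | htb
            · -- t ∈ U
              have htU : t ∈ U := (hUmem t).2 ⟨hat, hbt⟩
              rw [← eqmin z1 t hz1U hz1m htU htz1, ← eqmin z2 t hz2U hz2m htU htz2]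
            · -- a ≤ t ≤ b, so b ∈ U
              have hbU : b ∈ U := (hUmem b).2 ⟨hat.trans htb, le_refl b⟩
              rw [← eqmin z1 b hz1U hz1m hbU hbz1, ← eqmin z2 b hz2U hz2m hbU hbz2]
          · rcases (pcc b t).2 (Or.inl hCbt) with hbt | htb
            · -- b ≤ t ≤ a, so a ∈ U
              have haU : a ∈ U := (hUmem a).2 ⟨le_refl a, hbt.trans hta⟩
              rw [← eqmin z1 a hz1U hz1m haU haz1, ← eqmin z2 a hz2U hz2m haU haz2]
            · -- t ≤ a and t ≤ b : then C a = C t = C b, so a,b comparable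
              have hCta : C t ⊆ C a := hmono hta
              have hCab : C a ⊆ C b := fun y hy => hmono htb (hCat hy)
              have hCba : C b ⊆ C a := fun y hy => hCta (hCbt hy)
              rcases (pcc a b).2 (Or.inl hCab) with hab | hba
              · have hbU : b ∈ U := (hUmem b).2 ⟨hab, le_refl b⟩
                rw [← eqmin z1 b hz1U hz1m hbU hbz1, ← eqmin z2 b hz2U hz2m hbU hbz2]
              · have haU : a ∈ U := (hUmem a).2 ⟨le_refl a, hba⟩
                rw [← eqmin z1 a hz1U hz1m haU haz1, ← eqmin z2 a hz2U hz2m haU haz2]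
        · -- z2 ≤ t : C z2 ⊆ C t ⊆ C z1
          exact comp_eq ((pcc z1 z2).2 (Or.inr fun y hy => hCt1 (hmono hz2t hy)))
      · -- z1 ≤ t : C z1 ⊆ C t ⊆ C z2
        exact comp_eq ((pcc z1 z2).2 (Or.inl fun y hy => hCt2 (hmono hz1t hy)))
    obtain ⟨z, hzU, hzmin⟩ : ∃ z ∈ U, ∀ x ∈ U, ¬ x < z := by
      obtain ⟨m, hm⟩ := Finset.exists_minimal hUne
      exact ⟨m, hm.1, fun x hx hlt => hlt.not_ge (hm.2 hx hlt.le)⟩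
    obtain ⟨haz, hbz⟩ := (hUmem z).1 hzU
    refine ⟨z, haz, hbz, ?_⟩
    intro w haw hbw
    have hwU : w ∈ U := (hUmem w).2 ⟨haw, hbw⟩
    -- take a minimal element of U below w
    obtain ⟨z', hz'U', hz'min⟩ : ∃ m ∈ U.filter (fun y => y ≤ w), ∀ x ∈ U.filter (fun y => y ≤ w), ¬ x < m := by
      obtain ⟨m, hm⟩ := Finset.exists_minimal (s := U.filter (fun y => y ≤ w)) ⟨w, by simp [hwU]⟩
      exact ⟨m, hm.1, fun x hx hlt => hlt.not_ge (hm.2 hx hlt.le)⟩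
    have hz'U : z' ∈ U := (Finset.mem_filter.1 hz'U').1
    have hz'w : z' ≤ w := (Finset.mem_filter.1 hz'U').2
    have hz'minU : ∀ y ∈ U, ¬ y < z' := by
      intro y hy hlt
      exact hz'min y (Finset.mem_filter.2 ⟨hy, hlt.le.trans hz'w⟩) hlt
    have := key z z' hzU hz'U hzmin hz'minU
    exact this ▸ hz'w
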